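/- arXiv:1802.08957 — 6 statements merged into one kernel-verified Lean document; each statement's English description precedes it below -/
import Mathlib

section
/- With the notation of the post-measurement Bloch vectors x̃₀, x̃₁ corresponding to projective measurement directions n̂ and −n̂ on the second qubit, the squared Euclidean distance satisfies ‖x̃₀ − x̃₁‖² = 4 n̂ᵗ M n̂ / (1 − n̂ᵗ Y n̂)², where Y = y yᵗ, m = T − x yᵗ, and M = mᵗ m, provided 1 − (y·n̂)² ≠ 0. -/
open Matrix Complex Kronecker
open scoped ComplexOrder

noncomputable section

def pauli (i : Fin 3) : Matrix (Fin 2) (Fin 2) ℂ :=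
  if i = 0 then !![0, 1; 1, 0]
  else if i = 1 then !![0, -I; I, 0]
  else !![1, 0; 0, -1]

def dotsigma (x : Fin 3 → ℝ) : Matrix (Fin 2) (Fin 2) ℂ :=
  ∑ i, (x i : ℂ) • pauli i

def dot3 (x y : Fin 3 → ℝ) : ℝ := ∑ i, x i * y i

def norm3 (x : Fin 3 → ℝ) : ℝ := Real.sqrt (∑ i, (x i) ^ 2)

def trB (A : Matrix (Fin 2 × Fin 2) (Fin 2 × Fin 2) ℂ) : Matrix (Fin 2) (Fin 2) ℂ :=
  Matrix.of fun i j => ∑ k, A (i, k) (j, k)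

def trA (A : Matrix (Fin 2 × Fin 2) (Fin 2 × Fin 2) ℂ) : Matrix (Fin 2) (Fin 2) ℂ :=
  Matrix.of fun i j => ∑ k, A (k, i) (k, j)

set_option maxHeartbeats 2000000 in
theorem stmt2 (x y n : Fin 3 → ℝ) (T : Matrix (Fin 3) (Fin 3) ℝ)
    (hn : dot3 n n = 1) (hden : 1 - (dot3 y n) ^ 2 ≠ 0) :
    ∀ (m M : Matrix (Fin 3) (Fin 3) ℝ) (xt0 xt1 : Fin 3 → ℝ),
      m = T - vecMulVec x y →
      M = mᵀ * m →
      xt0 = (fun i => (x i + T.mulVec n i) / (1 + dot3 y n)) →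
      xt1 = (fun i => (x i + T.mulVec (-n) i) / (1 + dot3 y (-n))) →
      ∑ i, (xt0 i - xt1 i) ^ 2 =
        4 * dot3 n (M.mulVec n) / (1 - dot3 n ((vecMulVec y y).mulVec n)) ^ 2 := by
  intro m M xt0 xt1 hm hM h0 h1
  subst hm hM h0 h1
  set a := dot3 y n with ha'
  have ha : (1 + a) * (1 - a) ≠ 0 := by
    intro h; apply hden; nlinarith [h]
  have hya : dot3 y (-n) = -a := by simp [ha', dot3, Fin.sum_univ_three]
  have hTn : ∀ i, T.mulVec (-n) i = -(T.mulVec n i) := by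
    intro i; simp [Matrix.mulVec_neg]
  have key : ∀ i, (x i + T.mulVec n i) / (1 + a) - (x i + T.mulVec (-n) i) / (1 + dot3 y (-n))
      = 2 * (T.mulVec n i - a * x i) / ((1 + a) * (1 - a)) := by
    intro i
    rw [hya, hTn i]
    have h1 : (1 : ℝ) + a ≠ 0 := left_ne_zero_of_mul ha
    have h2 : (1 : ℝ) + -a ≠ 0 := by
      have := right_ne_zero_of_mul ha; rwa [sub_eq_add_neg] at this
    have h3 : (1 : ℝ) - a ≠ 0 := right_ne_zero_of_mul ha
    field_simp
    ring
  simp only [key]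
  have hM : dot3 n (((T - vecMulVec x y)ᵀ * (T - vecMulVec x y)).mulVec n)
      = ∑ i, (T.mulVec n i - a * x i) ^ 2 := by
    simp [dot3, ha', Matrix.mulVec, Matrix.mul_apply, dotProduct, Fin.sum_univ_three,
      Matrix.vecMulVec_apply]
    ring
  have hY : dot3 n ((vecMulVec y y).mulVec n) = a ^ 2 := by
    simp [dot3, ha', Matrix.mulVec, dotProduct, Fin.sum_univ_three, Matrix.vecMulVec_apply]
    ring
  rw [hM, hY]
  have hD : ((1 + a) * (1 - a)) = 1 - a ^ 2 := by ring
  simp only [hD, div_pow, ← Finset.sum_div]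
  congr 1
  rw [Finset.mul_sum]
  exact Finset.sum_congr rfl fun i _ => by ring
end
end

section
/- Let y ∈ ℝ³ with 0 < ‖y‖ < 1 and let M be a symmetric positive semidefinite 3×3 matrix such that y is an eigenvector of M for its largest eigenvalue. Then the maximum over unit vectors n̂ of f(n̂) = 4 n̂ᵗ M n̂ / (1 − (y·n̂)²)² is attained at n̂ = y/‖y‖, and equals 4 yᵗ M y / (‖y‖² (1 − ‖y‖²)²). -/
open Matrix Complex Kronecker
open scoped ComplexOrder

noncomputable section

lemma quad_bound (M : Matrix (Fin 3) (Fin 3) ℝ) (hM : M.IsHermitian) (n : Fin 3 → ℝ) :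
    n ⬝ᵥ M *ᵥ n ≤ (Finset.univ.sup' Finset.univ_nonempty hM.eigenvalues) * (n ⬝ᵥ n) := by
  set L := Finset.univ.sup' Finset.univ_nonempty hM.eigenvalues with hL
  set B : Matrix (Fin 3) (Fin 3) ℝ := (hM.eigenvectorUnitary : Matrix (Fin 3) (Fin 3) ℝ) with hB
  set c : Fin 3 → ℝ := n ᵥ* B with hc
  have hstar : star B = Bᵀ := by
    ext i j; simp [Matrix.conjTranspose_apply]
  have hBB : B * star B = 1 := (Matrix.mem_unitaryGroup_iff).mp hM.eigenvectorUnitary.2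
  have hcvec : star B *ᵥ n = c := by rw [hstar, Matrix.mulVec_transpose]
  have hquad : n ⬝ᵥ M *ᵥ n = ∑ i, hM.eigenvalues i * c i ^ 2 := by
    conv_lhs => rw [hM.spectral_theorem]
    simp only [Unitary.conjStarAlgAut_apply, Unitary.coe_star]
    rw [← hB]
    rw [← Matrix.mulVec_mulVec, ← Matrix.mulVec_mulVec, Matrix.dotProduct_mulVec, hcvec]
    simp [Matrix.mulVec_diagonal, dotProduct]
    exact Finset.sum_congr rfl fun i _ => by ring
  have hnorm : ∑ i, c i ^ 2 = n ⬝ᵥ n := by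
    have : (∑ i, c i ^ 2) = c ⬝ᵥ c := by
      simp [dotProduct, sq]
    have hBc : B *ᵥ c = n := by
      rw [← hcvec, Matrix.mulVec_mulVec, hBB, Matrix.one_mulVec]
    rw [this]
    conv_lhs => rw [hc]
    rw [← Matrix.dotProduct_mulVec, hBc]
  calc n ⬝ᵥ M *ᵥ n = ∑ i, hM.eigenvalues i * c i ^ 2 := hquad
    _ ≤ ∑ i, L * c i ^ 2 := Finset.sum_le_sum fun i _ =>
        mul_le_mul_of_nonneg_right (Finset.le_sup' _ (Finset.mem_univ i)) (sq_nonneg _)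
    _ = L * (n ⬝ᵥ n) := by rw [← Finset.mul_sum, hnorm]

theorem stmt4 (y : Fin 3 → ℝ) (hy0 : 0 < norm3 y) (hy1 : norm3 y < 1)
    (M : Matrix (Fin 3) (Fin 3) ℝ) (hM : M.IsHermitian) (hpsd : M.PosSemidef)
    (heig : M.mulVec y = (Finset.univ.sup' Finset.univ_nonempty hM.eigenvalues) • y) :
    IsGreatest {v : ℝ | ∃ n : Fin 3 → ℝ, dot3 n n = 1 ∧
        v = 4 * dot3 n (M.mulVec n) / (1 - (dot3 y n) ^ 2) ^ 2}
      (4 * dot3 y (M.mulVec y) / ((norm3 y) ^ 2 * (1 - (norm3 y) ^ 2) ^ 2)) ∧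
    4 * dot3 ((norm3 y)⁻¹ • y) (M.mulVec ((norm3 y)⁻¹ • y)) /
        (1 - (dot3 y ((norm3 y)⁻¹ • y)) ^ 2) ^ 2 =
      4 * dot3 y (M.mulVec y) / ((norm3 y) ^ 2 * (1 - (norm3 y) ^ 2) ^ 2) := by
  set L := Finset.univ.sup' Finset.univ_nonempty hM.eigenvalues with hL
  set a := norm3 y with ha
  have ha0 : a ≠ 0 := ne_of_gt hy0
  have hyy : dot3 y y = a ^ 2 := by
    rw [ha, norm3, Real.sq_sqrt (Finset.sum_nonneg fun i _ => sq_nonneg _)]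
    simp [dot3, sq]
  have hyMy : dot3 y (M.mulVec y) = L * a ^ 2 := by
    rw [heig, ← hyy]
    simp [dot3, Finset.mul_sum]
    exact Finset.sum_congr rfl fun i _ => by ring
  -- the candidate unit vector
  set n₀ : Fin 3 → ℝ := a⁻¹ • y with hn₀
  have hn₀n₀ : dot3 n₀ n₀ = 1 := by
    have : dot3 n₀ n₀ = a⁻¹ ^ 2 * dot3 y y := by
      simp [dot3, hn₀, Finset.mul_sum]
      exact Finset.sum_congr rfl fun i _ => by ring
    rw [this, hyy]
    field_simp
  have hyn₀ : dot3 y n₀ = a := by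
    have : dot3 y n₀ = a⁻¹ * dot3 y y := by
      simp [dot3, hn₀, Finset.mul_sum]
      exact Finset.sum_congr rfl fun i _ => by ring
    rw [this, hyy]
    field_simp
  have hn₀M : dot3 n₀ (M.mulVec n₀) = a⁻¹ ^ 2 * dot3 y (M.mulVec y) := by
    rw [hn₀, Matrix.mulVec_smul]
    simp only [dot3, Pi.smul_apply, smul_eq_mul, Finset.mul_sum]
    exact Finset.sum_congr rfl fun i _ => by ring
  have ha2 : (0:ℝ) < 1 - a ^ 2 := by nlinarith
  have hvaln₀ : 4 * dot3 n₀ (M.mulVec n₀) / (1 - (dot3 y n₀) ^ 2) ^ 2 =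
      4 * dot3 y (M.mulVec y) / (a ^ 2 * (1 - a ^ 2) ^ 2) := by
    rw [hn₀M, hyn₀]
    field_simp
  have hval : 4 * dot3 y (M.mulVec y) / (a ^ 2 * (1 - a ^ 2) ^ 2) =
      4 * L / (1 - a ^ 2) ^ 2 := by
    rw [hyMy]
    field_simp
  refine ⟨⟨⟨n₀, hn₀n₀, hvaln₀.symm⟩, ?_⟩, hvaln₀⟩
  rintro v ⟨n, hn, rfl⟩
  rw [hval]
  -- bounds on the numerator
  have hnum0 : 0 ≤ dot3 n (M.mulVec n) := by
    have := hpsd.dotProduct_mulVec_nonneg n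
    simpa [dot3, dotProduct] using this
  have hnum : dot3 n (M.mulVec n) ≤ L := by
    have := quad_bound M hM n
    have hnn : n ⬝ᵥ n = 1 := hn
    rw [hnn, mul_one] at this
    exact this
  have hL0 : 0 ≤ L := le_trans hnum0 hnum
  -- Cauchy–Schwarz bound on the denominator
  have hcs : (dot3 y n) ^ 2 ≤ a ^ 2 := by
    have h := Finset.sum_mul_sq_le_sq_mul_sq Finset.univ y n
    have h1 : (∑ i, y i ^ 2) = a ^ 2 := by
      rw [← hyy]; simp [dot3, sq]
    have h2 : (∑ i, n i ^ 2) = 1 := by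
      rw [← hn]; simp [dot3, sq]
    calc (dot3 y n) ^ 2 = (∑ i, y i * n i) ^ 2 := rfl
      _ ≤ (∑ i, y i ^ 2) * ∑ i, n i ^ 2 := h
      _ = a ^ 2 := by rw [h1, h2, mul_one]
  have hdenpos : (0:ℝ) < 1 - (dot3 y n) ^ 2 := by nlinarith
  have hden : (1 - a ^ 2) ^ 2 ≤ (1 - (dot3 y n) ^ 2) ^ 2 := by nlinarith
  exact div_le_div₀ (by linarith) (by linarith) (by positivity) hden
end
end

section
/- Let M = diag(M₁, M₂, M₃) with M₁ ≥ M₂ ≥ 0, M₃ ≥ 0, M₁ ≥ M₃, and let Y = diag(0,0,y²) with 0 ≤ y < 1. If (2M₃/(M₁+M₃))² ≤ (1−y²)² ≤ ((M₁+M₃)/(2M₁))² (with M₁+M₃ > 0), then the maximum over unit vectors n̂ ∈ ℝ³ of f(n̂) = 4 n̂ᵗ M n̂/(1 − n̂ᵗYn̂)² is attained at a vector with n̂₂ = 0 and n̂₃² = (2M₁y² − (M₁−M₃))/((M₁−M₃)y²) (when M₁ > M₃ and y > 0). -/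
open Matrix Complex Kronecker
open scoped ComplexOrder

noncomputable section

set_option maxHeartbeats 1000000 in
theorem stmt5 (M1 M2 M3 y : ℝ) (h12 : M1 ≥ M2) (h2 : M2 ≥ 0) (h3 : M3 ≥ 0)
    (h13 : M1 > M3) (hy0 : 0 < y) (hy1 : y < 1) (hsum : M1 + M3 > 0)
    (hlo : (2 * M3 / (M1 + M3)) ^ 2 ≤ (1 - y ^ 2) ^ 2)
    (hhi : (1 - y ^ 2) ^ 2 ≤ ((M1 + M3) / (2 * M1)) ^ 2) :
    ∃ n : Fin 3 → ℝ, dot3 n n = 1 ∧ n 1 = 0 ∧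
      (n 2) ^ 2 = (2 * M1 * y ^ 2 - (M1 - M3)) / ((M1 - M3) * y ^ 2) ∧
      IsGreatest {v : ℝ | ∃ u : Fin 3 → ℝ, dot3 u u = 1 ∧
          v = 4 * (M1 * (u 0) ^ 2 + M2 * (u 1) ^ 2 + M3 * (u 2) ^ 2) /
            (1 - y ^ 2 * (u 2) ^ 2) ^ 2}
        (4 * (M1 * (n 0) ^ 2 + M2 * (n 1) ^ 2 + M3 * (n 2) ^ 2) /
          (1 - y ^ 2 * (n 2) ^ 2) ^ 2) := by
  have hA : 0 < M1 - M3 := sub_pos.mpr h13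
  have hM1 : 0 < M1 := lt_of_le_of_lt h3 h13
  have hy2 : 0 < y ^ 2 := by positivity
  have hy2lt : y ^ 2 < 1 := by nlinarith
  have h1y : 0 < 1 - y ^ 2 := by linarith
  set c : ℝ := (2 * M1 * y ^ 2 - (M1 - M3)) / ((M1 - M3) * y ^ 2) with hcdef
  have hq : 0 < (M1 + M3) / (2 * M1) := by positivity
  have hub : 1 - y ^ 2 ≤ (M1 + M3) / (2 * M1) := by nlinarith
  have hub' : (1 - y ^ 2) * (2 * M1) ≤ M1 + M3 := by
    rwa [le_div_iff₀ (by positivity)] at hub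
  have hql : 0 ≤ 2 * M3 / (M1 + M3) := by positivity
  have hlb : 2 * M3 / (M1 + M3) ≤ 1 - y ^ 2 := by nlinarith
  have hlb' : 2 * M3 ≤ (1 - y ^ 2) * (M1 + M3) := by
    rwa [div_le_iff₀ hsum] at hlb
  have hden : 0 < (M1 - M3) * y ^ 2 := by positivity
  have hc0 : 0 ≤ c := div_nonneg (by nlinarith) hden.le
  have hc1 : c ≤ 1 := by rw [div_le_one hden]; nlinarith
  have hkey : (M1 - M3) * y ^ 2 * c = 2 * M1 * y ^ 2 - (M1 - M3) := by
    rw [hcdef]; field_simp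
  have hdc : 0 < 1 - y ^ 2 * c := by nlinarith
  refine ⟨![Real.sqrt (1 - c), 0, Real.sqrt c], ?_, ?_, ?_, ?_, ?_⟩
  · simp [dot3, Fin.sum_univ_three, Real.mul_self_sqrt (by linarith : (0:ℝ) ≤ 1 - c),
      Real.mul_self_sqrt hc0]
  · simp
  · simp [Real.sq_sqrt hc0]
  · exact ⟨![Real.sqrt (1 - c), 0, Real.sqrt c],
      by simp [dot3, Fin.sum_univ_three, Real.mul_self_sqrt (by linarith : (0:ℝ) ≤ 1 - c),
        Real.mul_self_sqrt hc0], rfl⟩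
  · rintro v ⟨u, hu, rfl⟩
    simp only [Matrix.cons_val_zero, Matrix.cons_val_one, Matrix.head_cons,
      Matrix.cons_val_two, Matrix.tail_cons, Real.sq_sqrt hc0,
      Real.sq_sqrt (by linarith : (0:ℝ) ≤ 1 - c)]
    have hu' : (u 0) ^ 2 + (u 1) ^ 2 + (u 2) ^ 2 = 1 := by
      have := hu
      simp only [dot3, Fin.sum_univ_three] at this
      nlinarith [this]
    set t : ℝ := (u 2) ^ 2 with htdef
    have ht0 : 0 ≤ t := sq_nonneg _
    have ht1 : t ≤ 1 := by nlinarith [sq_nonneg (u 0), sq_nonneg (u 1)]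
    have hdt : 0 < 1 - y ^ 2 * t := by nlinarith
    rw [div_le_div_iff₀ (by positivity) (by positivity)]
    have hstep1 : M1 * (u 0) ^ 2 + M2 * (u 1) ^ 2 + M3 * t ≤ M1 - (M1 - M3) * t := by
      nlinarith [mul_nonneg (sub_nonneg.mpr h12) (sq_nonneg (u 1))]
    have hident : (M1 - (M1 - M3) * c) * (1 - y ^ 2 * t) ^ 2
        - (M1 - (M1 - M3) * t) * (1 - y ^ 2 * c) ^ 2
        = y ^ 2 * ((M1 - M3) - M1 * y ^ 2) * (t - c) ^ 2 := by
      rw [hcdef]; field_simp; ring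
    have hAMy : 0 ≤ (M1 - M3) - M1 * y ^ 2 := by nlinarith
    have hnum : M1 * (1 - c) + M3 * c = M1 - (M1 - M3) * c := by ring
    nlinarith [hident, hstep1, sq_nonneg (1 - y ^ 2 * c), sq_nonneg (t - c),
      mul_nonneg (mul_nonneg hy2.le hAMy) (sq_nonneg (t - c)),
      mul_le_mul_of_nonneg_right hstep1 (sq_nonneg (1 - y ^ 2 * c))]
end
end

section
/- Let M = diag(M₁, M₂, M₃) with M₁ ≥ M₂ ≥ 0 and M₁ ≥ M₃ ≥ 0, and 0 ≤ y < 1. If (1 − y²)² ≥ ((M₁+M₃)/(2M₁))² (with M₁ > 0), then max over unit n̂ of f(n̂) = 4 n̂ᵗ M n̂/(1 − y²n̂₃²)² equals 4M₁, attained at n̂ = (1,0,0)ᵗ. -/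
open Matrix Complex Kronecker
open scoped ComplexOrder

noncomputable section

theorem stmt6 (M1 M2 M3 y : ℝ) (h12 : M1 ≥ M2) (h2 : M2 ≥ 0)
    (h13 : M1 ≥ M3) (h3 : M3 ≥ 0) (hy0 : 0 ≤ y) (hy1 : y < 1) (hM1 : M1 > 0)
    (hcond : (1 - y ^ 2) ^ 2 ≥ ((M1 + M3) / (2 * M1)) ^ 2) :
    IsGreatest {v : ℝ | ∃ u : Fin 3 → ℝ, dot3 u u = 1 ∧
        v = 4 * (M1 * (u 0) ^ 2 + M2 * (u 1) ^ 2 + M3 * (u 2) ^ 2) /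
          (1 - y ^ 2 * (u 2) ^ 2) ^ 2}
      (4 * M1) ∧
    4 * (M1 * ((![1, 0, 0] : Fin 3 → ℝ) 0) ^ 2 + M2 * ((![1, 0, 0] : Fin 3 → ℝ) 1) ^ 2
        + M3 * ((![1, 0, 0] : Fin 3 → ℝ) 2) ^ 2) /
      (1 - y ^ 2 * ((![1, 0, 0] : Fin 3 → ℝ) 2) ^ 2) ^ 2 = 4 * M1 := by
  have hy2 : (0:ℝ) < 1 - y ^ 2 := by nlinarith
  have hkey : M1 - M3 ≥ 2 * M1 * y ^ 2 := by
    have hx : (M1 + M3) / (2 * M1) * (2 * M1) = M1 + M3 :=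
      div_mul_cancel₀ _ (by linarith)
    have hxnn : (0:ℝ) ≤ (M1 + M3) / (2 * M1) := by positivity
    have h2' : (M1 + M3) / (2 * M1) ≤ 1 - y ^ 2 := by nlinarith
    nlinarith
  constructor
  · constructor
    · exact ⟨![1, 0, 0], by simp [dot3, Fin.sum_univ_three], by norm_num [show (![1, 0, 0] : Fin 3 → ℝ) 2 = 0 from rfl]⟩
    · rintro v ⟨u, hu, rfl⟩
      have hu' : (u 0) ^ 2 + (u 1) ^ 2 + (u 2) ^ 2 = 1 := by
        simp [dot3, Fin.sum_univ_three] at hu; nlinarith [hu]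
      set t := (u 2) ^ 2 with ht
      have ht0 : 0 ≤ t := sq_nonneg _
      have ht1 : t ≤ 1 := by nlinarith [sq_nonneg (u 0), sq_nonneg (u 1)]
      have hden : 0 < (1 - y ^ 2 * t) ^ 2 := by
        have : y ^ 2 * t ≤ y ^ 2 := mul_le_of_le_one_right (sq_nonneg y) ht1
        have h' : 0 < 1 - y ^ 2 * t := by linarith
        positivity
      rw [div_le_iff₀ hden]
      nlinarith [sq_nonneg (u 1), sq_nonneg (u 0), mul_nonneg ht0 ht0,
        mul_nonneg (mul_nonneg hM1.le (mul_nonneg (sq_nonneg y) (sq_nonneg y))) (mul_nonneg ht0 ht0),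
        mul_nonneg ht0 (by nlinarith : (0:ℝ) ≤ M1 - M3 - 2 * M1 * y ^ 2),
        mul_nonneg (sq_nonneg (u 1)) (sub_nonneg.mpr h12)]
  · norm_num [show (![1, 0, 0] : Fin 3 → ℝ) 2 = 0 from rfl]
end
end

section
/- Let M = diag(M₁, M₂, M₃) with M₁ ≥ M₂ ≥ 0 and M₁ ≥ M₃ ≥ 0, and 0 ≤ y < 1. If (1 − y²)² ≤ (2M₃/(M₁+M₃))² (with M₁+M₃ > 0), then max over unit n̂ of f(n̂) = 4 n̂ᵗ M n̂/(1 − y²n̂₃²)² equals 4M₃/(1 − y²)², attained at n̂ = (0,0,1)ᵗ. -/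
open Matrix Complex Kronecker
open scoped ComplexOrder

noncomputable section

theorem stmt7 (M1 M2 M3 y : ℝ) (h12 : M1 ≥ M2) (h2 : M2 ≥ 0)
    (h13 : M1 ≥ M3) (h3 : M3 ≥ 0) (hy0 : 0 ≤ y) (hy1 : y < 1) (hsum : M1 + M3 > 0)
    (hcond : (1 - y ^ 2) ^ 2 ≤ (2 * M3 / (M1 + M3)) ^ 2) :
    IsGreatest {v : ℝ | ∃ u : Fin 3 → ℝ, dot3 u u = 1 ∧
        v = 4 * (M1 * (u 0) ^ 2 + M2 * (u 1) ^ 2 + M3 * (u 2) ^ 2) /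
          (1 - y ^ 2 * (u 2) ^ 2) ^ 2}
      (4 * M3 / (1 - y ^ 2) ^ 2) ∧
    4 * (M1 * ((![0, 0, 1] : Fin 3 → ℝ) 0) ^ 2 + M2 * ((![0, 0, 1] : Fin 3 → ℝ) 1) ^ 2
        + M3 * ((![0, 0, 1] : Fin 3 → ℝ) 2) ^ 2) /
      (1 - y ^ 2 * ((![0, 0, 1] : Fin 3 → ℝ) 2) ^ 2) ^ 2 = 4 * M3 / (1 - y ^ 2) ^ 2 := by
  have hy2 : y ^ 2 < 1 := by nlinarith
  have hden : (0:ℝ) < 1 - y ^ 2 := by linarith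
  -- key: (1 - y^2) * (M1 + M3) ≤ 2 * M3
  have hkey : (1 - y ^ 2) * (M1 + M3) ≤ 2 * M3 := by
    have h1 : 1 - y ^ 2 ≤ 2 * M3 / (M1 + M3) := by
      nlinarith [sq_nonneg (1 - y ^ 2 - 2 * M3 / (M1 + M3)), div_nonneg (by linarith : (0:ℝ) ≤ 2 * M3) hsum.le]
    calc (1 - y ^ 2) * (M1 + M3) ≤ (2 * M3 / (M1 + M3)) * (M1 + M3) := by
          exact mul_le_mul_of_nonneg_right h1 hsum.le
      _ = 2 * M3 := by field_simp
  constructor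
  · constructor
    · exact ⟨![0, 0, 1], by simp [dot3, Fin.sum_univ_three], by norm_num [Matrix.cons_val_two, Matrix.tail_cons, Matrix.head_cons]⟩
    · rintro v ⟨u, hu, rfl⟩
      have hu' : u 0 ^ 2 + u 1 ^ 2 + u 2 ^ 2 = 1 := by
        have := hu; simp [dot3, Fin.sum_univ_three] at this; nlinarith [this]
      set a := u 0 ^ 2; set b := u 1 ^ 2; set c := u 2 ^ 2
      have ha : 0 ≤ a := sq_nonneg _
      have hb : 0 ≤ b := sq_nonneg _
      have hc : 0 ≤ c := sq_nonneg _
      have hc1 : c ≤ 1 := by nlinarith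
      have hd2 : (0:ℝ) < 1 - y ^ 2 * c := by nlinarith
      rw [div_le_div_iff₀ (by positivity) (by positivity)]
      have h4 : M1 * (1 - y ^ 2) ^ 2 * (a + b + c) = M1 * (1 - y ^ 2) ^ 2 * 1 := by
        rw [hu']
      nlinarith [h4, mul_nonneg (mul_nonneg (mul_nonneg (sub_nonneg.2 hc1) hden.le)
          (sub_nonneg.2 hkey)) (by norm_num : (0:ℝ) ≤ 4),
        mul_nonneg (mul_nonneg h3 (sq_nonneg (y ^ 2 * (1 - c)))) (by norm_num : (0:ℝ) ≤ 4),
        mul_nonneg (mul_nonneg (mul_nonneg hb (sub_nonneg.2 h12)) (sq_nonneg (1 - y ^ 2)))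
          (by norm_num : (0:ℝ) ≤ 4)]
  · norm_num [Matrix.cons_val_two, Matrix.tail_cons, Matrix.head_cons]
end
end

section
/- Let y ∈ ℝ³ with 0 ≤ ‖y‖ < 1, k̂ a unit vector with y = ‖y‖k̂, and suppose T = t k̂k̂ᵗ and x ∈ ℝ³ arbitrary; set m = T − xyᵗ and M = mᵗm. Then the function f(n̂) = 4 n̂ᵗMn̂/(1 − (y·n̂)²)² over unit vectors n̂ attains its maximum at n̂ = k̂ (provided t ≠ ‖y‖(x·k̂) or x ≠ 0 appropriately making M ≠ 0 and M k̂ proportional to its top eigenvector). -/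
open Matrix Complex Kronecker
open scoped ComplexOrder

noncomputable section

theorem stmt15 (x k : Fin 3 → ℝ) (hk : dot3 k k = 1) (t c : ℝ)
    (hc0 : 0 ≤ c) (hc1 : c < 1)
    (hne : ∃ i, t * k i - c * x i ≠ 0)
    (m M : Matrix (Fin 3) (Fin 3) ℝ)
    (hm : m = t • vecMulVec k k - vecMulVec x (c • k))
    (hM : M = mᵀ * m) :
    IsGreatest {v : ℝ | ∃ n : Fin 3 → ℝ, dot3 n n = 1 ∧
        v = 4 * dot3 n (M.mulVec n) / (1 - (dot3 (c • k) n) ^ 2) ^ 2}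
      (4 * dot3 k (M.mulVec k) / (1 - (dot3 (c • k) k) ^ 2) ^ 2) := by
  subst hm hM
  set W : ℝ := (t * k 0 - c * x 0) ^ 2 + (t * k 1 - c * x 1) ^ 2 + (t * k 2 - c * x 2) ^ 2
    with hW
  have hWnn : 0 ≤ W := by positivity
  have key : ∀ n : Fin 3 → ℝ,
      dot3 n (((t • vecMulVec k k - vecMulVec x (c • k))ᵀ *
        (t • vecMulVec k k - vecMulVec x (c • k))).mulVec n) = W * (dot3 k n) ^ 2 := by
    intro n
    simp [dot3, Matrix.mulVec, Matrix.mul_apply, vecMulVec_apply, dotProduct,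
      Fin.sum_univ_three, Matrix.transpose_apply, hW]
    ring
  have hckn : ∀ n : Fin 3 → ℝ, dot3 (c • k) n = c * dot3 k n := by
    intro n
    simp [dot3, Fin.sum_univ_three]
    ring
  have hkk : dot3 k k = (k 0)^2 + (k 1)^2 + (k 2)^2 := by
    simp [dot3, Fin.sum_univ_three]; ring
  constructor
  · exact ⟨k, hk, rfl⟩
  · rintro v ⟨n, hn, rfl⟩
    rw [key, key, hckn, hckn, hk]
    have hcn : ∀ p : Fin 3 → ℝ, dot3 p p = (p 0)^2 + (p 1)^2 + (p 2)^2 := by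
      intro p; simp [dot3, Fin.sum_univ_three]; ring
    have hdkn : dot3 k n = k 0 * n 0 + k 1 * n 1 + k 2 * n 2 := by
      simp [dot3, Fin.sum_univ_three]
    set a := dot3 k n with ha
    have ha2 : a ^ 2 ≤ 1 := by
      have h1 := hcn k; have h2 := hcn n
      rw [hk] at h1; rw [hn] at h2
      rw [hdkn]
      nlinarith [sq_nonneg (k 0 * n 1 - k 1 * n 0), sq_nonneg (k 0 * n 2 - k 2 * n 0),
        sq_nonneg (k 1 * n 2 - k 2 * n 1)]
    have hc2 : c ^ 2 < 1 := by nlinarith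
    have hd1 : (0:ℝ) < 1 - (c * 1) ^ 2 := by nlinarith
    have hd2 : (0:ℝ) < 1 - (c * a) ^ 2 := by nlinarith [sq_nonneg c, mul_pow c a 2]
    rw [div_le_div_iff₀ (by positivity) (by positivity)]
    have hu0 : 0 ≤ a ^ 2 := sq_nonneg a
    have hcu : c ^ 4 * a ^ 2 ≤ 1 := by nlinarith [sq_nonneg (c^2)]
    have step : a ^ 2 * (1 - c ^ 2) ^ 2 ≤ (1 - c ^ 2 * a ^ 2) ^ 2 := by
      nlinarith [mul_nonneg (sub_nonneg.2 ha2) (sub_nonneg.2 hcu)]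
    have e1 : 4 * (W * a ^ 2) * (1 - (c * 1) ^ 2) ^ 2 = 4 * (W * (a ^ 2 * (1 - c ^ 2) ^ 2)) := by
      ring
    have e2 : 4 * (W * 1 ^ 2) * (1 - (c * a) ^ 2) ^ 2 = 4 * (W * (1 - c ^ 2 * a ^ 2) ^ 2) := by
      ring
    rw [e1, e2]
    have h := mul_le_mul_of_nonneg_left step hWnn
    linarith
end
end
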